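/- Let (aₙ) be a sequence of real numbers with generating function g(x) = ∑ aₙxⁿ ∈ ℝ[[x]], and let (bₙ) be the sequence whose generating function is x·(2−x)⁻¹·g(x). Then (∀ n, ∑_{k=0}^{n} (−1)^k binom(n,k) aₖ = aₙ) holds if and only if (∀ n, ∑_{k=0}^{n} (−1)^k binom(n,k) bₖ = −bₙ) holds. (That is, g is the generating function of a P-invariant sequence of the first kind iff (x/(2−x))g(x) is the generating function of an inverse P-invariant sequence of the first kind.) -/

import Mathlib

open PowerSeries Finset

/-- Pascal-rule identity for the signed binomial transform. -/
lemma stmt_12_key_sum (c : ℕ → ℝ) (n : ℕ) :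
    ∑ k ∈ range (n + 2), (-1 : ℝ) ^ k * ((n+1).choose k : ℝ) * c k
      = ∑ k ∈ range (n + 1), (-1 : ℝ) ^ k * (n.choose k : ℝ) * c k
        - ∑ k ∈ range (n + 1), (-1 : ℝ) ^ k * (n.choose k : ℝ) * c (k + 1) := by
  rw [Finset.sum_range_succ' _ (n+1)]
  have h1 : ∀ k ∈ range (n+1),
      (-1 : ℝ) ^ (k+1) * (((n+1).choose (k+1) : ℕ) : ℝ) * c (k+1)
      = -((-1 : ℝ)^k * (n.choose k : ℝ) * c (k+1))
        + (-1 : ℝ)^(k+1) * (n.choose (k+1) : ℝ) * c (k+1) := by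
    intro k _
    rw [Nat.choose_succ_succ]
    push_cast
    ring
  rw [Finset.sum_congr rfl h1, Finset.sum_add_distrib, Finset.sum_neg_distrib]
  have h2 : ∑ k ∈ range (n+1), (-1 : ℝ)^(k+1) * (n.choose (k+1) : ℝ) * c (k+1)
      = ∑ k ∈ range (n + 1), (-1 : ℝ) ^ k * (n.choose k : ℝ) * c k - c 0 := by
    rw [Finset.sum_range_succ' (fun k => (-1 : ℝ) ^ k * (n.choose k : ℝ) * c k) n,
        Finset.sum_range_succ]
    simp
  rw [h2]; simp; ring

/-- A sequence `(aₙ)` is P-invariant of the first kind iff the sequence `(bₙ)` with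
generating function `(x/(2−x))·g(x)` (where `g` is the generating function of `(aₙ)`) is
inverse P-invariant of the first kind. -/
theorem stmt_12 (a b : ℕ → ℝ)
    (hb : ∀ n : ℕ,
      b n = PowerSeries.coeff n
        (PowerSeries.X * (2 - PowerSeries.X)⁻¹ * PowerSeries.mk a)) :
    (∀ n : ℕ,
        ∑ k ∈ Finset.range (n + 1), (-1 : ℝ) ^ k * (n.choose k : ℝ) * a k = a n) ↔
      (∀ n : ℕ,
        ∑ k ∈ Finset.range (n + 1), (-1 : ℝ) ^ k * (n.choose k : ℝ) * b k = -b n) := by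
  -- From `hb`, derive the relation `(2 - X) * mk b = X * mk a`.
  have hB : (2 - X : ℝ⟦X⟧) * PowerSeries.mk b = X * PowerSeries.mk a := by
    have hmk : PowerSeries.mk b = X * (2 - X : ℝ⟦X⟧)⁻¹ * PowerSeries.mk a := by
      ext n; simp [hb n]
    have hu : (2 - X : ℝ⟦X⟧) * (2 - X : ℝ⟦X⟧)⁻¹ = 1 := by
      apply PowerSeries.mul_inv_cancel
      rw [map_sub, map_ofNat, constantCoeff_X, sub_zero]
      norm_num
    calc (2 - X : ℝ⟦X⟧) * PowerSeries.mk b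
        = X * ((2 - X) * (2 - X)⁻¹) * PowerSeries.mk a := by rw [hmk]; ring
      _ = X * PowerSeries.mk a := by rw [hu, mul_one]
  have hb0 : b 0 = 0 := by
    have := congrArg (PowerSeries.coeff 0) hB
    simp [sub_mul, coeff_zero_eq_constantCoeff, map_ofNat] at this
    linarith
  have hrec : ∀ n, 2 * b (n+1) - b n = a n := by
    intro n
    have := congrArg (PowerSeries.coeff (n+1)) hB
    simpa [sub_mul, coeff_succ_X_mul, two_mul] using this
  -- abbreviations for the signed binomial transforms
  set Ta : ℕ → ℝ := fun n => ∑ k ∈ range (n + 1), (-1 : ℝ) ^ k * (n.choose k : ℝ) * a k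
    with hTa
  set Tb : ℕ → ℝ := fun n => ∑ k ∈ range (n + 1), (-1 : ℝ) ^ k * (n.choose k : ℝ) * b k
    with hTb
  have hshift : ∀ n, ∑ k ∈ range (n + 1), (-1 : ℝ) ^ k * (n.choose k : ℝ) * b (k + 1)
      = (Ta n + Tb n) / 2 := by
    intro n
    have : ∀ k ∈ range (n+1), (-1 : ℝ) ^ k * (n.choose k : ℝ) * b (k + 1)
        = ((-1 : ℝ) ^ k * (n.choose k : ℝ) * a k
            + (-1 : ℝ) ^ k * (n.choose k : ℝ) * b k) / 2 := by
      intro k _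
      have hbk : b (k + 1) = (a k + b k) / 2 := by linarith [hrec k]
      rw [hbk]; ring
    rw [Finset.sum_congr rfl this, ← Finset.sum_div, Finset.sum_add_distrib]
  have hTbrec : ∀ n, Tb (n + 1) = (Tb n - (Ta n + Tb n) / 2) := by
    intro n
    have := stmt_12_key_sum b n
    rw [hshift n] at this
    exact this
  have hTb0 : Tb 0 = 0 := by simp [hTb, hb0]
  constructor
  · intro hA
    have main : ∀ n, Tb n = -b n := by
      intro n
      induction n with
      | zero => simp [hTb0, hb0]
      | succ m ih =>
        have hAm : Ta m = a m := hA m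
        rw [hTbrec m, ih, hAm]
        have := hrec m
        linarith
    exact main
  · intro hBB n
    have h1 := hTbrec n
    have e1 : Tb n = -b n := hBB n
    have e2 : Tb (n + 1) = -b (n + 1) := hBB (n + 1)
    rw [e1, e2] at h1
    have h2 := hrec n
    show Ta n = a n
    linarith
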